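/- In a C4-free graph of minimum degree δ ≥ 2, for every vertex v there are at least δ² - 2⌊δ/2⌋ + 1 vertices at distance at most 2 from v. -/

import Mathlib

lemma even_card_of_invol {V : Type*} [DecidableEq V] (s : Finset V) :
    ∀ σ : V → V,
    (∀ u ∈ s, σ u ∈ s) → (∀ u ∈ s, σ u ≠ u) → (∀ u ∈ s, σ (σ u) = u) →
    Even s.card := by
  induction s using Finset.strongInduction with
  | _ s ih =>
    intro σ hmem hne hinv
    rcases s.eq_empty_or_nonempty with rfl | ⟨u, hu⟩
    · simp
    · have h1 : σ u ∈ s := hmem u hu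
      set t := s \ {u, σ u} with ht
      have hpairsub : ({u, σ u} : Finset V) ⊆ s := by
        intro x hx
        simp only [Finset.mem_insert, Finset.mem_singleton] at hx
        rcases hx with rfl | rfl
        exacts [hu, h1]
      have htsub : t ⊂ s := by
        refine ⟨Finset.sdiff_subset, fun hss => ?_⟩
        have := hss hu
        simp [ht] at this
      have hcard : s.card = t.card + 2 := by
        have h2 : ({u, σ u} : Finset V).card = 2 :=
          Finset.card_pair (Ne.symm (hne u hu))
        have h3 : t.card = s.card - 2 := by
          rw [ht, Finset.card_sdiff_of_subset hpairsub, h2]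
        have h4 := Finset.card_le_card hpairsub
        rw [h2] at h4
        omega
      have hteven : Even t.card := by
        refine ih t htsub σ ?_ ?_ ?_
        · intro x hx
          simp only [ht, Finset.mem_sdiff, Finset.mem_insert, Finset.mem_singleton] at hx ⊢
          obtain ⟨hxs, hx2⟩ := hx
          push_neg at hx2
          refine ⟨hmem x hxs, ?_⟩
          push_neg
          constructor
          · intro h; exact hx2.2 (by rw [← hinv x hxs, h])
          · intro h
            have h' : σ (σ x) = σ (σ u) := congrArg σ h
            rw [hinv x hxs, hinv u hu] at h'
            exact hx2.1 h'
        · intro x hx; exact hne x (Finset.mem_sdiff.mp hx).1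
        · intro x hx; exact hinv x (Finset.mem_sdiff.mp hx).1
      obtain ⟨k, hk⟩ := hteven
      exact ⟨k + 1, by omega⟩

lemma edist_le_two_decomp {V : Type*} (G : SimpleGraph V) (v w : V) (h : G.edist v w ≤ 2) :
    w = v ∨ G.Adj v w ∨ ∃ u, G.Adj v u ∧ G.Adj u w := by
  have hne : G.edist v w ≠ ⊤ := by
    intro h'; rw [h'] at h; exact (by simp : ¬ ((⊤:ℕ∞) ≤ 2)) h
  obtain ⟨p, hp⟩ := (G.reachable_of_edist_ne_top hne).exists_walk_length_eq_edist
  have hlen : p.length ≤ 2 := by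
    have := hp ▸ h
    exact_mod_cast this
  cases p with
  | nil => exact Or.inl rfl
  | cons h1 q =>
    cases q with
    | nil => exact Or.inr (Or.inl h1)
    | cons h2 r =>
      cases r with
      | nil => exact Or.inr (Or.inr ⟨_, h1, h2⟩)
      | cons h3 r' => simp [SimpleGraph.Walk.length_cons] at hlen

/-- `G` contains no cycle of length 4 as a (not necessarily induced) subgraph. -/
def C4Free {V : Type*} (G : SimpleGraph V) : Prop :=
  ¬ ∃ a b c d : V, a ≠ b ∧ a ≠ c ∧ a ≠ d ∧ b ≠ c ∧ b ≠ d ∧ c ≠ d ∧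
    G.Adj a b ∧ G.Adj b c ∧ G.Adj c d ∧ G.Adj d a

/-- `G` has edge-connectivity at least `k`: it stays connected after
deleting any set of fewer than `k` edges. -/
def EdgeConnAtLeast {V : Type*} (G : SimpleGraph V) (k : ℕ) : Prop :=
  ∀ s : Finset (Sym2 V), s.card < k → (G.deleteEdges ↑s).Connected

/-- In a C4-free graph, there is no 4-cycle `x a y b`. -/
lemma c4_helper {V : Type*} {G : SimpleGraph V} (hC4 : C4Free G) {x y a b : V}
    (hxy : x ≠ y) (hab : a ≠ b) (h1 : G.Adj x a) (h2 : G.Adj a y) (h3 : G.Adj y b)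
    (h4 : G.Adj b x) : False :=
  hC4 ⟨x, a, y, b, h1.ne, hxy, h4.ne', h2.ne, hab, h3.ne, h1, h2, h3, h4⟩

theorem ball_two_lower_bound {V : Type*} (G : SimpleGraph V) (hC4 : C4Free G)
    (δ : ℕ) (hδ2 : 2 ≤ δ) (hδ : ∀ v : V, δ ≤ (G.neighborSet v).ncard) (v : V) :
    δ ^ 2 - 2 * (δ / 2) + 1 ≤ {w : V | G.edist v w ≤ 2}.ncard := by
  classical
  -- every neighborhood is finite
  have hfin : ∀ u : V, (G.neighborSet u).Finite := by
    intro u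
    by_contra h
    have h0 := Set.Infinite.ncard h
    have := hδ u
    omega
  set nbrsF : V → Finset V := fun u => (hfin u).toFinset with hnbrsF
  have hmemF : ∀ u a : V, a ∈ nbrsF u ↔ G.Adj u a := by
    intro u a
    simp [hnbrsF, Set.Finite.mem_toFinset]
  have hcardF : ∀ u : V, δ ≤ (nbrsF u).card := by
    intro u
    have := hδ u
    rwa [Set.ncard_eq_toFinset_card _ (hfin u)] at this
  -- choose δ neighbors of v
  obtain ⟨N', hN'sub, hN'card⟩ := Finset.exists_subset_card_eq (hcardF v)
  have hadjN' : ∀ u ∈ N', G.Adj v u := fun u hu => (hmemF v u).mp (hN'sub hu)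
  -- uniqueness of neighbors in N'
  have huniq : ∀ u : V, u ≠ v → ∀ a ∈ nbrsF u ∩ N', ∀ b ∈ nbrsF u ∩ N', a = b := by
    intro u hune a ha b hb
    by_contra hab
    simp only [Finset.mem_inter] at ha hb
    exact c4_helper hC4 (Ne.symm hune) hab (hadjN' a ha.2) ((hmemF u a).mp ha.1).symm
      ((hmemF u b).mp hb.1) (hadjN' b hb.2).symm
  -- external neighborhoods
  set Su : V → Finset V := fun u => nbrsF u \ insert v N' with hSu
  have hScard : ∀ u ∈ N', δ ≤ (Su u).card + 1 + (nbrsF u ∩ N').card := by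
    intro u hu
    have h1 : (Su u).card + (nbrsF u ∩ insert v N').card = (nbrsF u).card :=
      Finset.card_sdiff_add_card_inter (nbrsF u) (insert v N')
    have h2 : (nbrsF u ∩ insert v N') ⊆ insert v (nbrsF u ∩ N') := by
      intro a ha
      simp only [Finset.mem_inter, Finset.mem_insert] at ha ⊢
      tauto
    have h3 := Finset.card_le_card h2
    have h4 := Finset.card_insert_le v (nbrsF u ∩ N')
    have h5 := hcardF u
    omega
  -- the matched vertices
  set M := N'.filter (fun u => (nbrsF u ∩ N').Nonempty) with hM
  have hMeven : Even M.card := by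
    set σ : V → V := fun u => if h : (nbrsF u ∩ N').Nonempty then h.choose else u with hσ
    have hσspec : ∀ u ∈ M, σ u ∈ nbrsF u ∩ N' := by
      intro u hu
      have h := (Finset.mem_filter.mp hu).2
      simp only [hσ, dif_pos h]
      exact h.choose_spec
    have hσmem : ∀ u ∈ M, σ u ∈ M := by
      intro u hu
      have hs := Finset.mem_inter.mp (hσspec u hu)
      refine Finset.mem_filter.mpr ⟨hs.2, ⟨u, ?_⟩⟩
      exact Finset.mem_inter.mpr ⟨(hmemF (σ u) u).mpr ((hmemF u (σ u)).mp hs.1).symm,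
        (Finset.mem_filter.mp hu).1⟩
    have hσne : ∀ u ∈ M, σ u ≠ u := by
      intro u hu h
      have hs := hσspec u hu
      rw [h] at hs
      exact G.irrefl ((hmemF u u).mp (Finset.mem_inter.mp hs).1)
    have hσinv : ∀ u ∈ M, σ (σ u) = u := by
      intro u hu
      have hs := hσspec u hu
      have hs2 := hσspec (σ u) (hσmem u hu)
      have huin : u ∈ nbrsF (σ u) ∩ N' :=
        Finset.mem_inter.mpr ⟨(hmemF (σ u) u).mpr
          ((hmemF u (σ u)).mp (Finset.mem_inter.mp hs).1).symm, (Finset.mem_filter.mp hu).1⟩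
      exact huniq (σ u) ((hadjN' (σ u) (Finset.mem_inter.mp hs).2).ne') _ hs2 _ huin
    exact even_card_of_invol M σ hσmem hσne hσinv
  have hMle : M.card ≤ δ := hN'card ▸ Finset.card_le_card (Finset.filter_subset _ _)
  -- sum of intersection sizes is at most |M|
  have hsumε : ∑ u ∈ N', (nbrsF u ∩ N').card ≤ M.card := by
    have hεle : ∀ u ∈ N', (nbrsF u ∩ N').card ≤ if (nbrsF u ∩ N').Nonempty then 1 else 0 := by
      intro u hu
      by_cases h : (nbrsF u ∩ N').Nonempty
      · rw [if_pos h]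
        exact Finset.card_le_one.mpr (fun a ha b hb => huniq u ((hadjN' u hu).ne') a ha b hb)
      · rw [if_neg h, Finset.card_eq_zero.mpr (Finset.not_nonempty_iff_eq_empty.mp h)]
    calc ∑ u ∈ N', (nbrsF u ∩ N').card
        ≤ ∑ u ∈ N', if (nbrsF u ∩ N').Nonempty then 1 else 0 := Finset.sum_le_sum hεle
      _ = M.card := (Finset.card_filter _ _).symm
  -- external neighborhoods are pairwise disjoint
  have hdisj : ∀ u1 ∈ N', ∀ u2 ∈ N', u1 ≠ u2 → Disjoint (Su u1) (Su u2) := by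
    intro u1 h1 u2 h2 h12
    rw [Finset.disjoint_left]
    intro w hw1 hw2
    simp only [hSu, Finset.mem_sdiff, Finset.mem_insert] at hw1 hw2
    push_neg at hw1 hw2
    exact c4_helper hC4 (Ne.symm hw1.2.1) h12 (hadjN' u1 h1) ((hmemF u1 w).mp hw1.1)
      ((hmemF u2 w).mp hw2.1).symm (hadjN' u2 h2).symm
  -- the ball
  set B := insert v (N' ∪ N'.biUnion Su) with hB
  have hvnotin : v ∉ N' ∪ N'.biUnion Su := by
    simp only [Finset.mem_union, Finset.mem_biUnion, not_or]
    constructor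
    · intro h; exact G.irrefl (hadjN' v h)
    · rintro ⟨u, hu, hv⟩
      exact (Finset.mem_sdiff.mp hv).2 (Finset.mem_insert_self v N')
  have hdisj2 : Disjoint N' (N'.biUnion Su) := by
    rw [Finset.disjoint_left]
    intro a ha hb
    obtain ⟨u, hu, hau⟩ := Finset.mem_biUnion.mp hb
    exact (Finset.mem_sdiff.mp hau).2 (Finset.mem_insert_of_mem ha)
  have hBcard : B.card = 1 + δ + ∑ u ∈ N', (Su u).card := by
    rw [hB, Finset.card_insert_of_notMem hvnotin,
        Finset.card_union_of_disjoint hdisj2, hN'card, Finset.card_biUnion hdisj]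
    ring
  have hsum : δ * δ ≤ (∑ u ∈ N', (Su u).card) + δ + M.card := by
    have h1 : ∑ u ∈ N', δ ≤ ∑ u ∈ N', ((Su u).card + 1 + (nbrsF u ∩ N').card) :=
      Finset.sum_le_sum hScard
    rw [Finset.sum_const, hN'card, smul_eq_mul] at h1
    rw [Finset.sum_add_distrib, Finset.sum_add_distrib, Finset.sum_const, hN'card,
      smul_eq_mul, mul_one] at h1
    omega
  have hBge : δ * δ - 2 * (δ / 2) + 1 ≤ B.card := by
    rw [hBcard]
    obtain ⟨k, hk⟩ := hMeven
    generalize (δ * δ) = D at hsum ⊢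
    omega
  -- the ball is finite and contains B
  have hballfin : {w : V | G.edist v w ≤ 2}.Finite := by
    apply Set.Finite.subset (Finset.finite_toSet (insert v ((nbrsF v) ∪ (nbrsF v).biUnion nbrsF)))
    intro w hw
    simp only [Set.mem_setOf_eq] at hw
    have : w ∈ insert v ((nbrsF v) ∪ (nbrsF v).biUnion nbrsF) := by
      rcases edist_le_two_decomp G v w hw with rfl | h | ⟨u, h1, h2⟩
      · exact Finset.mem_insert_self _ _
      · exact Finset.mem_insert_of_mem (Finset.mem_union_left _ ((hmemF v w).mpr h))
      · exact Finset.mem_insert_of_mem (Finset.mem_union_right _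
          (Finset.mem_biUnion.mpr ⟨u, (hmemF v u).mpr h1, (hmemF u w).mpr h2⟩))
    exact this
  have hsub : (↑B : Set V) ⊆ {w : V | G.edist v w ≤ 2} := by
    intro w hw
    have hw' : w ∈ B := hw
    rw [hB, Finset.mem_insert] at hw'
    simp only [Set.mem_setOf_eq]
    rcases hw' with rfl | hw'
    · simp [SimpleGraph.edist_self]
    · rcases Finset.mem_union.mp hw' with h | h
      · calc G.edist v w = 1 := (SimpleGraph.edist_eq_one_iff_adj).mpr (hadjN' w h)
          _ ≤ 2 := by norm_num
      · obtain ⟨u, hu, hwu⟩ := Finset.mem_biUnion.mp h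
        have hadjw : G.Adj u w := (hmemF u w).mp (Finset.mem_sdiff.mp hwu).1
        have e1 : G.edist v u ≤ 1 := le_of_eq ((SimpleGraph.edist_eq_one_iff_adj).mpr (hadjN' u hu))
        have e2 : G.edist u w ≤ 1 := le_of_eq ((SimpleGraph.edist_eq_one_iff_adj).mpr hadjw)
        calc G.edist v w ≤ G.edist v u + G.edist u w := SimpleGraph.edist_triangle
          _ ≤ 1 + 1 := add_le_add e1 e2
          _ = 2 := by norm_num
  calc δ ^ 2 - 2 * (δ / 2) + 1 ≤ B.card := by rw [sq]; exact hBge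
    _ = (↑B : Set V).ncard := (Set.ncard_coe_finset B).symm
    _ ≤ _ := Set.ncard_le_ncard hsub hballfin
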